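/- Let $R \in \mathbb{R}^{n \times n}$ be a nonnegative matrix with $R_{ii} \ge 1/2$ for all $i$ (i.e., $2R - I$ is entrywise nonnegative), and suppose $\|2R - I\|_2 \le 1$. Then for every vector $x \in \mathbb{R}^n$, $x^T R R^T x \le \frac{1}{2} x^T (R + R^T) x$. Consequently $\lambda_2(RR^T) \le \lambda_2(\frac{R + R^T}{2})$ when both matrices share the top eigenvector. -/
import Mathlib

open Finset Matrix

private lemma dot_cs (n : ℕ) (x y : Fin n → ℝ) :
    (x ⬝ᵥ y) ^ 2 ≤ (x ⬝ᵥ x) * (y ⬝ᵥ y) := by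
  have := Finset.sum_mul_sq_le_sq_mul_sq Finset.univ x y
  simpa [dotProduct, sq, Finset.mul_sum, mul_comm, mul_left_comm] using this

private lemma dot_self_nonneg (n : ℕ) (x : Fin n → ℝ) : 0 ≤ x ⬝ᵥ x :=
  Finset.sum_nonneg fun i _ => mul_self_nonneg _

private lemma transpose_contract (n : ℕ) (A : Matrix (Fin n) (Fin n) ℝ)
    (h : ∀ x : Fin n → ℝ, (A *ᵥ x) ⬝ᵥ (A *ᵥ x) ≤ x ⬝ᵥ x) :
    ∀ x : Fin n → ℝ, (Aᵀ *ᵥ x) ⬝ᵥ (Aᵀ *ᵥ x) ≤ x ⬝ᵥ x := by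
  intro x
  set y := Aᵀ *ᵥ x with hy
  have h1 : y ⬝ᵥ y = x ⬝ᵥ (A *ᵥ y) := by
    rw [Matrix.dotProduct_mulVec x A y, ← Matrix.mulVec_transpose, ← hy]
  have h2 : (x ⬝ᵥ (A *ᵥ y)) ^ 2 ≤ (x ⬝ᵥ x) * ((A *ᵥ y) ⬝ᵥ (A *ᵥ y)) := dot_cs n x _
  have h3 := h y
  have h4 := dot_self_nonneg n y
  have h5 := dot_self_nonneg n x
  nlinarith [h2, h3, h4, h5, h1]

theorem lazy_quadratic_form_bound (n : ℕ) (R : Matrix (Fin n) (Fin n) ℝ)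
    (hRnn : ∀ i j, 0 ≤ R i j)
    (hLazy : ∀ i, (1 : ℝ) / 2 ≤ R i i)
    (hnorm : ∀ x : Fin n → ℝ,
      ∑ i, ((((2 : ℝ) • R - 1) *ᵥ x) i) ^ 2 ≤ ∑ i, (x i) ^ 2) :
    (∀ x : Fin n → ℝ,
      x ⬝ᵥ ((R * Rᵀ) *ᵥ x) ≤ (1 / 2) * (x ⬝ᵥ ((R + Rᵀ) *ᵥ x))) ∧
    (∀ v : Fin n → ℝ,
      sSup {r : ℝ | ∃ x : Fin n → ℝ, (∑ i, (x i) ^ 2) = 1 ∧ x ⬝ᵥ v = 0 ∧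
          r = x ⬝ᵥ ((R * Rᵀ) *ᵥ x)}
        ≤ sSup {r : ℝ | ∃ x : Fin n → ℝ, (∑ i, (x i) ^ 2) = 1 ∧ x ⬝ᵥ v = 0 ∧
            r = x ⬝ᵥ (((2⁻¹ : ℝ) • (R + Rᵀ)) *ᵥ x)}) := by
  set A : Matrix (Fin n) (Fin n) ℝ := (2 : ℝ) • R - 1 with hA
  have hAcontract : ∀ x : Fin n → ℝ, (A *ᵥ x) ⬝ᵥ (A *ᵥ x) ≤ x ⬝ᵥ x := by
    intro x
    have := hnorm x
    simpa [dotProduct, sq] using this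
  have hAT := transpose_contract n A hAcontract
  -- u = Rᵀ *ᵥ x
  have hATx : ∀ x : Fin n → ℝ, Aᵀ *ᵥ x = (2 : ℝ) • (Rᵀ *ᵥ x) - x := by
    intro x
    simp [hA, Matrix.transpose_sub, Matrix.transpose_smul, Matrix.sub_mulVec,
      Matrix.smul_mulVec]
  -- central inequality: u ⬝ u ≤ u ⬝ x
  have key : ∀ x : Fin n → ℝ, (Rᵀ *ᵥ x) ⬝ᵥ (Rᵀ *ᵥ x) ≤ (Rᵀ *ᵥ x) ⬝ᵥ x := by
    intro x
    have h := hAT x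
    rw [hATx x] at h
    set u := Rᵀ *ᵥ x
    have hexp : ((2 : ℝ) • u - x) ⬝ᵥ ((2 : ℝ) • u - x)
        = 4 * (u ⬝ᵥ u) - 4 * (u ⬝ᵥ x) + x ⬝ᵥ x := by
      simp [dotProduct_sub, sub_dotProduct, dotProduct_smul,
        smul_dotProduct, smul_eq_mul, dotProduct_comm x u]
      ring
    rw [hexp] at h
    linarith
  have hRRT : ∀ x : Fin n → ℝ, x ⬝ᵥ ((R * Rᵀ) *ᵥ x) = (Rᵀ *ᵥ x) ⬝ᵥ (Rᵀ *ᵥ x) := by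
    intro x
    rw [← Matrix.mulVec_mulVec, Matrix.dotProduct_mulVec, ← Matrix.mulVec_transpose]
  have hSym : ∀ x : Fin n → ℝ, x ⬝ᵥ ((R + Rᵀ) *ᵥ x) = 2 * ((Rᵀ *ᵥ x) ⬝ᵥ x) := by
    intro x
    rw [Matrix.add_mulVec, dotProduct_add]
    have h1 : x ⬝ᵥ (R *ᵥ x) = (Rᵀ *ᵥ x) ⬝ᵥ x := by
      rw [Matrix.dotProduct_mulVec, ← Matrix.mulVec_transpose]
    have h2 : x ⬝ᵥ (Rᵀ *ᵥ x) = (Rᵀ *ᵥ x) ⬝ᵥ x := dotProduct_comm _ _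
    rw [h1, h2]; ring
  have part1 : ∀ x : Fin n → ℝ,
      x ⬝ᵥ ((R * Rᵀ) *ᵥ x) ≤ (1 / 2) * (x ⬝ᵥ ((R + Rᵀ) *ᵥ x)) := by
    intro x
    rw [hRRT x, hSym x]
    linarith [key x]
  refine ⟨part1, ?_⟩
  intro v
  set S₂ : Set ℝ := {r : ℝ | ∃ x : Fin n → ℝ, (∑ i, (x i) ^ 2) = 1 ∧ x ⬝ᵥ v = 0 ∧
      r = x ⬝ᵥ (((2⁻¹ : ℝ) • (R + Rᵀ)) *ᵥ x)} with hS₂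
  have hval : ∀ x : Fin n → ℝ, x ⬝ᵥ (((2⁻¹ : ℝ) • (R + Rᵀ)) *ᵥ x) = (Rᵀ *ᵥ x) ⬝ᵥ x := by
    intro x
    rw [Matrix.smul_mulVec, dotProduct_smul, smul_eq_mul, hSym x]
    ring
  have hdotx : ∀ x : Fin n → ℝ, x ⬝ᵥ x = ∑ i, (x i) ^ 2 := by
    intro x; simp [dotProduct, sq]
  -- every element of S₂ is in [0,1]
  have hS₂mem : ∀ r ∈ S₂, 0 ≤ r ∧ r ≤ 1 := by
    rintro r ⟨x, hx1, -, rfl⟩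
    rw [hval x]
    have hxx : x ⬝ᵥ x = 1 := by rw [hdotx]; exact hx1
    have h1 := key x
    have h2 := dot_self_nonneg n (Rᵀ *ᵥ x)
    have h3 := dot_cs n (Rᵀ *ᵥ x) x
    rw [hxx] at h3
    constructor
    · linarith
    · nlinarith
  have hbdd : BddAbove S₂ := ⟨1, fun r hr => (hS₂mem r hr).2⟩
  apply Real.sSup_le
  · rintro r ⟨x, hx1, hx2, rfl⟩
    have hmem : x ⬝ᵥ (((2⁻¹ : ℝ) • (R + Rᵀ)) *ᵥ x) ∈ S₂ := ⟨x, hx1, hx2, rfl⟩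
    calc x ⬝ᵥ ((R * Rᵀ) *ᵥ x) ≤ x ⬝ᵥ (((2⁻¹ : ℝ) • (R + Rᵀ)) *ᵥ x) := by
          rw [hRRT x, hval x]; exact key x
      _ ≤ sSup S₂ := le_csSup hbdd hmem
  · rcases Set.eq_empty_or_nonempty S₂ with hE | ⟨r, hr⟩
    · rw [hE, Real.sSup_empty]
    · exact le_trans (hS₂mem r hr).1 (le_csSup hbdd hr)
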